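/- For every real number t < 0, the function a_t : ℝ → ℝ (the unique continuous function with a_t ∘ x_t = y_t) is infinitely differentiable (C^∞) on all of ℝ. -/

import Mathlib

/-- The model function `x_t(u) = (15/8)·∫₀ᵘ (s² − t)² ds`. -/
noncomputable def xfun (t u : ℝ) : ℝ := (15/8) * ∫ s in (0:ℝ)..u, (s^2 - t)^2

/-- The model function `y_t(u) = −(1/2)(u³ − 3tu)`. -/
noncomputable def yfun (t u : ℝ) : ℝ := -(1/2) * (u^3 - 3*t*u)

lemma xfun_eq (t u : ℝ) :
    xfun t u = (15/8) * (u^5/5 - 2/3*t*u^3 + t^2*u) := by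
  have h1 : (∫ s in (0:ℝ)..u, (s^2 - t)^2)
      = ∫ s in (0:ℝ)..u, (s^4 - 2*t*s^2 + t^2) := by
    apply intervalIntegral.integral_congr
    intro s _
    ring
  have i4 : IntervalIntegrable (fun s : ℝ => s^4) MeasureTheory.volume 0 u :=
    (continuous_pow 4).intervalIntegrable 0 u
  have i2 : IntervalIntegrable (fun s : ℝ => 2*t*s^2) MeasureTheory.volume 0 u := by
    apply Continuous.intervalIntegrable; continuity
  have i0 : IntervalIntegrable (fun _ : ℝ => t^2) MeasureTheory.volume 0 u :=
    intervalIntegrable_const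
  rw [xfun, h1, intervalIntegral.integral_add (i4.sub i2) i0,
    intervalIntegral.integral_sub i4 i2]
  have h2 : (∫ s in (0:ℝ)..u, 2*t*s^2) = 2*t * ∫ s in (0:ℝ)..u, s^2 :=
    intervalIntegral.integral_const_mul _ _
  rw [h2, integral_pow, integral_pow, intervalIntegral.integral_const]
  push_cast
  simp only [smul_eq_mul]
  ring

/-- For `t < 0`, the unique continuous function `a_t` with `a_t ∘ x_t = y_t`
is infinitely differentiable (C^∞) on all of `ℝ`. -/
theorem graph_function_smooth_of_neg (t : ℝ) (ht : t < 0) (a : ℝ → ℝ)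
    (ha : Continuous a) (hax : ∀ u : ℝ, a (xfun t u) = yfun t u) :
    ContDiff ℝ (⊤ : ℕ∞) a := by
  set P : ℝ → ℝ := fun u => (15/8) * (u^5/5 - 2/3*t*u^3 + t^2*u) with hP
  have hxP : xfun t = P := funext fun u => xfun_eq t u
  have hPc : ContDiff ℝ (⊤ : ℕ∞) P := by
    apply ContDiff.mul contDiff_const
    apply ContDiff.add
    · exact ((contDiff_id.pow 5).div_const 5).sub (contDiff_const.mul (contDiff_id.pow 3))
    · exact contDiff_const.mul contDiff_id
  have hPd : ∀ u : ℝ, HasDerivAt P ((15/8) * (u^2 - t)^2) u := by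
    intro u
    have h := ((((hasDerivAt_pow 5 u).div_const 5).sub
      ((hasDerivAt_pow 3 u).const_mul (2/3*t))).add
      ((hasDerivAt_id u).const_mul (t^2))).const_mul (15/8 : ℝ)
    convert h using 1
    · rfl
    · rfl
    · funext y; simp only [hP, Pi.add_apply, Pi.sub_apply, id]
    · push_cast
      ring
  have hne : ∀ u : ℝ, (15/8 : ℝ) * (u^2 - t)^2 ≠ 0 := by
    intro u
    have h1 : (0:ℝ) < u^2 - t := by nlinarith [sq_nonneg u]
    have : (0:ℝ) < (15/8) * (u^2 - t)^2 := by
      have := pow_pos h1 2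
      linarith
    exact ne_of_gt this
  -- surjectivity of P
  have hsurj : ∀ x₀ : ℝ, ∃ u, P u = x₀ := by
    intro x₀
    have ht2 : (0:ℝ) < t^2 := by nlinarith
    have hc : (0:ℝ) < (15/8) * t^2 := by linarith
    set b : ℝ := |x₀| / ((15/8) * t^2) with hb
    have hb0 : 0 ≤ b := div_nonneg (abs_nonneg _) hc.le
    have hPb : |x₀| ≤ P b := by
      have h1 : (15/8) * t^2 * b = |x₀| := by
        rw [hb, mul_div_cancel₀ _ (ne_of_gt hc)]
      have h2 : (15/8) * t^2 * b ≤ P b := by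
        simp only [hP]
        nlinarith [pow_nonneg hb0 5, pow_nonneg hb0 3, sq_nonneg t]
      linarith
    have hodd : P (-b) = - P b := by simp only [hP]; ring
    have hmem : x₀ ∈ Set.Icc (P (-b)) (P b) := by
      constructor
      · rw [hodd]
        have := neg_abs_le x₀
        linarith
      · exact le_trans (le_abs_self x₀) hPb
    have := intermediate_value_univ (-b) b (hPc.continuous)
    exact this hmem
  -- main argument: local smoothness at every point
  rw [contDiff_iff_contDiffAt]
  intro x₀
  obtain ⟨u₀, hu₀⟩ := hsurj x₀
  have hcd : ContDiffAt ℝ ((⊤ : ℕ∞) : WithTop ℕ∞) P u₀ := hPc.contDiffAt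
  have hf' : HasFDerivAt P
      (ContinuousLinearEquiv.unitsEquivAut ℝ
        (Units.mk0 _ (hne u₀)) : ℝ →L[ℝ] ℝ) u₀ :=
    (hPd u₀).hasFDerivAt_equiv (hne u₀)
  have hn : ((⊤ : ℕ∞) : WithTop ℕ∞) ≠ 0 := by simp
  set inv := hcd.localInverse hf' hn with hinvdef
  have hinv : ContDiffAt ℝ ((⊤ : ℕ∞) : WithTop ℕ∞) inv (P u₀) :=
    hcd.to_localInverse hf' hn
  have hev : ∀ᶠ y in nhds (P u₀), P (inv y) = y :=
    (hcd.hasStrictFDerivAt' hf' hn).eventually_right_inverse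
  have hyc : ContDiff ℝ (⊤ : ℕ∞) (yfun t) := by
    unfold yfun
    apply ContDiff.mul contDiff_const
    exact (contDiff_id.pow 3).sub (contDiff_const.mul contDiff_id)
  have key : ContDiffAt ℝ ((⊤ : ℕ∞) : WithTop ℕ∞) a (P u₀) := by
    have hcomp : ContDiffAt ℝ ((⊤ : ℕ∞) : WithTop ℕ∞) (fun y => yfun t (inv y)) (P u₀) :=
      (hyc.contDiffAt).comp _ hinv
    apply hcomp.congr_of_eventuallyEq
    filter_upwards [hev] with y hy
    have := hax (inv y)
    rw [hxP] at this
    rw [hy] at this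
    exact this
  rw [hu₀] at key
  exact key
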